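/- Fix m ≥ 3. Let a₁ = (1 - (r/2)·sin(π/m), 0). With vertices a_j of the regular m-gon inscribed in the unit circle (a₁-vertex at (1,0)), parametrize side A₁A₂ by M₁(t) = (1-t)·(1,0) + t·(cos(2π/m), sin(2π/m)). Then 2·∫₀^{r/ℓ} ‖M₁(t) − a₁‖² dt = (1/24)·r³·(3 cos(2π/m) + 5)·csc(π/m), where ℓ = 2 sin(π/m) and 0 ≤ r ≤ ℓ. -/

import Mathlib

open Real

lemma poly_integral (a b c T : ℝ) :
    ∫ t in (0:ℝ)..T, (a * t ^ 2 + b * t + c) = a * T ^ 3 / 3 + b * T ^ 2 / 2 + c * T := by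
  have h1 : ∫ t in (0:ℝ)..T, a * t ^ 2 = a * T ^ 3 / 3 := by
    rw [intervalIntegral.integral_const_mul, integral_pow]
    norm_num
    ring
  have h2 : ∫ t in (0:ℝ)..T, b * t = b * T ^ 2 / 2 := by
    rw [intervalIntegral.integral_const_mul, integral_id]
    ring
  have h3 : ∫ t in (0:ℝ)..T, c = c * T := by
    simp [mul_comm]
  rw [intervalIntegral.integral_add
        ((by continuity : Continuous fun t : ℝ => a * t ^ 2 + b * t).intervalIntegrable _ _)
        ((continuous_const : Continuous fun _ : ℝ => c).intervalIntegrable _ _),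
      intervalIntegral.integral_add
        ((by continuity : Continuous fun t : ℝ => a * t ^ 2).intervalIntegrable _ _)
        ((by continuity : Continuous fun t : ℝ => b * t).intervalIntegrable _ _),
      h1, h2, h3]

/-- Equation (1) of the paper: with `a₁ = (1 - (r/2) sin(π/m), 0)` and
`M₁(t) = (1-t)(1,0) + t(cos(2π/m), sin(2π/m))`, one has
`2 ∫₀^{r/ℓ} ‖M₁(t) - a₁‖² dt = (1/24) r³ (3cos(2π/m)+5) csc(π/m)`
for `ℓ = 2 sin(π/m)` and `0 ≤ r ≤ ℓ`. -/
theorem corner_distortion (m : ℕ) (hm : 3 ≤ m) (ℓ r : ℝ)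
    (hℓ : ℓ = 2 * Real.sin (π / m)) (hr0 : 0 ≤ r) (hrℓ : r ≤ ℓ)
    (a₁ : EuclideanSpace ℝ (Fin 2))
    (ha₁ : a₁ = ![1 - r / 2 * Real.sin (π / m), 0])
    (M₁ : ℝ → EuclideanSpace ℝ (Fin 2))
    (hM₁ : ∀ t, M₁ t = (1 - t) • (!₂[1, 0] : EuclideanSpace ℝ (Fin 2)) +
      t • (!₂[Real.cos (2 * π / m), Real.sin (2 * π / m)] : EuclideanSpace ℝ (Fin 2))) :
    2 * ∫ t in Set.Icc 0 (r / ℓ), ‖M₁ t - a₁‖ ^ 2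
      = (1 / 24) * r ^ 3 * (3 * Real.cos (2 * π / m) + 5) * (Real.sin (π / m))⁻¹ := by
  set s := Real.sin (π / m) with hs
  set c := Real.cos (π / m) with hc
  have hmpos : (0:ℝ) < m := by positivity
  have hx1 : 0 < π / m := by positivity
  have hm3 : (3:ℝ) ≤ m := by exact_mod_cast hm
  have hx2 : π / m < π := by
    rw [div_lt_iff₀ hmpos]
    have : π * 1 < π * m := by
      apply mul_lt_mul_of_pos_left _ Real.pi_pos
      linarith
    linarith
  have hspos : 0 < s := Real.sin_pos_of_pos_of_lt_pi hx1 hx2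
  have hsne : s ≠ 0 := ne_of_gt hspos
  have hℓpos : 0 < ℓ := by rw [hℓ]; positivity
  have h2x : 2 * π / (m:ℝ) = 2 * (π / m) := by ring
  have hc2 : Real.cos (2 * π / m) = 2 * c ^ 2 - 1 := by
    rw [h2x, Real.cos_two_mul]
  have hs2 : Real.sin (2 * π / m) = 2 * s * c := by
    rw [h2x, Real.sin_two_mul]
  have hcc : c ^ 2 = 1 - s ^ 2 := by
    have := Real.sin_sq_add_cos_sq (π / m)
    rw [← hs, ← hc] at this; linarith
  -- the integrand as a polynomial
  have hnorm : ∀ t : ℝ, ‖M₁ t - a₁‖ ^ 2 =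
      ((2 * c ^ 2 - 1 - 1) ^ 2 + (2 * s * c) ^ 2) * t ^ 2
        + (2 * (2 * c ^ 2 - 1 - 1) * (r / 2 * s)) * t + (r / 2 * s) ^ 2 := by
    intro t
    rw [hM₁, EuclideanSpace.norm_eq, Real.sq_sqrt (by positivity)]
    simp only [Fin.sum_univ_two, PiLp.sub_apply, PiLp.add_apply, PiLp.smul_apply, ha₁, PiLp.toLp_apply,
      Pi.sub_apply, Pi.add_apply, Pi.smul_apply,
      Matrix.cons_val_zero, Matrix.cons_val_one, Matrix.head_cons, smul_eq_mul,
      Real.norm_eq_abs, sq_abs, hc2, hs2]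
    ring
  have hT0 : (0:ℝ) ≤ r / ℓ := div_nonneg hr0 hℓpos.le
  rw [MeasureTheory.integral_Icc_eq_integral_Ioc,
      ← intervalIntegral.integral_of_le hT0]
  simp only [hnorm]
  rw [poly_integral]
  rw [hℓ, hc2]
  have hA : (2 * c ^ 2 - 1 - 1) ^ 2 + (2 * s * c) ^ 2 = 4 * s ^ 2 := by
    linear_combination (4 * c ^ 2 - 4) * hcc
  rw [hA, hcc]
  field_simp
  ring
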